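/- arXiv:1902.08987 — 3 statements merged into one kernel-verified Lean document; each statement's English description precedes it below -/
import Mathlib

section
/- Let μ be a probability measure on a space X and let w : X → (0,∞) be measurable with ∫ w^{k/2}(ln w)² dμ > 0. Then for every real b ≠ 0 and every real α with α(k−α) ≤ k²/4 (i.e. α real), ∫ w^α dμ ≥ ∫ w^{k/2} dμ > ∫ w^{k/2} cos(b ln w) dμ, provided additionally that ∫ w^α dμ = ∫ w^{k−α} dμ (symmetry) and that ln w is not μ-a.e. constant with b·ln w a multiple of 2π. -/
open MeasureTheory Real

/-- Abstract version of the inequality chain: for a probability measure `μ` and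
a positive weight `w`, with the symmetry `∫ w^α = ∫ w^{k−α}` and `b ln w` not
a.e. a multiple of `2π`, one has
`∫ w^α dμ ≥ ∫ w^{k/2} dμ > ∫ w^{k/2} cos(b ln w) dμ`. -/
theorem weight_integral_inequality_chain {X : Type*} [MeasurableSpace X]
    (μ : Measure X) [IsProbabilityMeasure μ] (k : ℝ)
    (w : X → ℝ) (hw : Measurable w) (hwpos : ∀ x, 0 < w x)
    (hvar : 0 < ∫ x, w x ^ (k / 2) * Real.log (w x) ^ 2 ∂μ)
    (b : ℝ) (hb : b ≠ 0) (α : ℝ)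
    (hint1 : Integrable (fun x => w x ^ α) μ)
    (hint2 : Integrable (fun x => w x ^ (k - α)) μ)
    (hint3 : Integrable (fun x => w x ^ (k / 2)) μ)
    (hint4 : Integrable (fun x => w x ^ (k / 2) * Real.log (w x) ^ 2) μ)
    (hsym : ∫ x, w x ^ α ∂μ = ∫ x, w x ^ (k - α) ∂μ)
    (hnc : ¬ ∀ᵐ x ∂μ, ∃ n : ℤ, b * Real.log (w x) = 2 * π * n) :
    (∫ x, w x ^ (k / 2) ∂μ) ≤ ∫ x, w x ^ α ∂μ
      ∧ (∫ x, w x ^ (k / 2) * Real.cos (b * Real.log (w x)) ∂μ)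
          < ∫ x, w x ^ (k / 2) ∂μ := by
  constructor
  · -- AM-GM: w^{k/2} ≤ (w^α + w^{k-α})/2
    have hptwise : ∀ x, w x ^ (k / 2) ≤ (w x ^ α + w x ^ (k - α)) / 2 := by
      intro x
      have hx := hwpos x
      have h1 : w x ^ (k / 2) = w x ^ (α / 2) * w x ^ ((k - α) / 2) := by
        rw [← Real.rpow_add hx]; ring_nf
      have h2 : w x ^ α = (w x ^ (α / 2)) ^ 2 := by
        rw [← Real.rpow_natCast (w x ^ (α/2)) 2, ← Real.rpow_mul hx.le]; norm_num
      have h3 : w x ^ (k - α) = (w x ^ ((k - α) / 2)) ^ 2 := by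
        rw [← Real.rpow_natCast (w x ^ ((k-α)/2)) 2, ← Real.rpow_mul hx.le]; norm_num
      rw [h1, h2, h3]
      nlinarith [sq_nonneg (w x ^ (α/2) - w x ^ ((k-α)/2))]
    have := integral_mono hint3 ((hint1.add hint2).div_const 2) hptwise
    simp only [Pi.add_apply] at this
    rw [integral_div, integral_add hint1 hint2, ← hsym] at this
    linarith
  · -- strict inequality
    set f : X → ℝ := fun x => w x ^ (k / 2) * (1 - Real.cos (b * Real.log (w x))) with hf
    have hfnn : ∀ x, 0 ≤ f x := fun x =>
      mul_nonneg (Real.rpow_nonneg (hwpos x).le _) (by nlinarith [Real.cos_le_one (b * Real.log (w x))])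
    have hcint : Integrable (fun x => w x ^ (k / 2) * Real.cos (b * Real.log (w x))) μ := by
      have hm : Measurable (fun x => w x ^ (k / 2)) := by
        have he : (fun x => w x ^ (k / 2)) = fun x => Real.exp (Real.log (w x) * (k / 2)) :=
          funext fun x => Real.rpow_def_of_pos (hwpos x) _
        rw [he]; exact (hw.log.mul_const _).exp
      refine hint3.mono' ?_ ?_
      · exact (hm.aestronglyMeasurable.mul
          (((hw.log.const_mul b).cos).aestronglyMeasurable))
      · filter_upwards with x
        rw [norm_mul, Real.norm_eq_abs, Real.norm_eq_abs,
          abs_of_nonneg (Real.rpow_nonneg (hwpos x).le _)]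
        exact mul_le_of_le_one_right (Real.rpow_nonneg (hwpos x).le _) (Real.abs_cos_le_one _)
    have hfint : Integrable f μ := by
      have : f = fun x => w x ^ (k / 2) - w x ^ (k / 2) * Real.cos (b * Real.log (w x)) := by
        funext x; simp [hf]; ring
      rw [this]; exact hint3.sub hcint
    have hpos : 0 < ∫ x, f x ∂μ := by
      rw [integral_pos_iff_support_of_nonneg hfnn hfint]
      have hsub : {x | ¬ ∃ n : ℤ, b * Real.log (w x) = 2 * π * n} ⊆ Function.support f := by
        intro x hx
        have hcos : Real.cos (b * Real.log (w x)) ≠ 1 := by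
          intro hc
          rw [Real.cos_eq_one_iff] at hc
          obtain ⟨n, hn⟩ := hc
          exact hx ⟨n, by linarith [hn]⟩
        have h1 : 0 < 1 - Real.cos (b * Real.log (w x)) :=
          lt_of_le_of_ne (by nlinarith [Real.cos_le_one (b * Real.log (w x))])
            (fun h => hcos (by linarith))
        exact (mul_pos (Real.rpow_pos_of_pos (hwpos x) _) h1).ne'
      have hne : μ {x | ¬ ∃ n : ℤ, b * Real.log (w x) = 2 * π * n} ≠ 0 := by
        rwa [MeasureTheory.ae_iff] at hnc
      exact lt_of_lt_of_le (pos_iff_ne_zero.mpr hne) (measure_mono hsub)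
    have : (∫ x, f x ∂μ)
        = (∫ x, w x ^ (k / 2) ∂μ) - ∫ x, w x ^ (k / 2) * Real.cos (b * Real.log (w x)) ∂μ := by
      rw [← integral_sub hint3 hcint]
      congr 1; funext x; simp [hf]; ring
    linarith
end

section
/- Let ρ > 0, 0 < η < ρ. For ψ ∈ [0, π/2], let ω(ψ) = l(ψ)/q(ψ) where l(ψ) = √(ρ² − η² sin²ψ) + η cos ψ and q(ψ) = √(ρ² − η² sin²ψ) − η cos ψ, and set τ(ψ) = ln ω(0) − ln ω(ψ). Then τ(ψ) = (η/ρ)ψ² + O(ψ⁴) as ψ → 0; in particular lim_{ψ→0⁺} √(τ(ψ))/sin ψ = √(η/ρ). -/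
open Real Filter Asymptotics

lemma ev_abs_le_one : ∀ᶠ ψ : ℝ in nhds 0, |ψ| ≤ 1 := by
  filter_upwards [Metric.ball_mem_nhds (0:ℝ) one_pos] with ψ hψ
  rw [Metric.mem_ball, Real.dist_eq, sub_zero] at hψ; exact le_of_lt hψ

lemma sin_sq_isBigO : (fun ψ : ℝ => Real.sin ψ ^ 2 - ψ ^ 2) =O[nhds 0] fun ψ => ψ ^ 4 := by
  rw [isBigO_iff]
  refine ⟨3, ?_⟩
  filter_upwards [ev_abs_le_one] with ψ h1
  have hb := Real.sin_bound h1
  have h4 : |ψ| ^ 4 ≤ |ψ| ^ 3 := pow_le_pow_of_le_one (abs_nonneg _) h1 (by norm_num)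
  have h2 : |Real.sin ψ - ψ| ≤ |ψ| ^ 3 := by
    have : |Real.sin ψ - ψ| ≤ |Real.sin ψ - (ψ - ψ ^ 3 / 6)| + |ψ ^ 3 / 6| := by
      have : Real.sin ψ - ψ = (Real.sin ψ - (ψ - ψ ^ 3 / 6)) + (-(ψ ^ 3) / 6) := by ring
      rw [this]
      calc |(Real.sin ψ - (ψ - ψ ^ 3 / 6)) + (-(ψ ^ 3) / 6)| ≤
          |Real.sin ψ - (ψ - ψ ^ 3 / 6)| + |(-(ψ ^ 3) / 6)| := abs_add_le _ _
        _ = |Real.sin ψ - (ψ - ψ ^ 3 / 6)| + |ψ ^ 3 / 6| := by rw [neg_div, abs_neg]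
    have h3 : |ψ ^ 3 / 6| = |ψ| ^ 3 / 6 := by rw [abs_div, abs_pow]; norm_num
    nlinarith [abs_nonneg ψ, pow_nonneg (abs_nonneg ψ) 3]
  have h5 : |Real.sin ψ + ψ| ≤ 3 * |ψ| := by
    have := abs_sin_le_abs (x := ψ)
    calc |Real.sin ψ + ψ| ≤ |Real.sin ψ| + |ψ| := abs_add_le _ _
      _ ≤ 3 * |ψ| := by linarith [abs_nonneg ψ]
  have key : |Real.sin ψ ^ 2 - ψ ^ 2| ≤ 3 * |ψ| ^ 4 := by
    have : Real.sin ψ ^ 2 - ψ ^ 2 = (Real.sin ψ - ψ) * (Real.sin ψ + ψ) := by ring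
    rw [this, abs_mul]
    calc |Real.sin ψ - ψ| * |Real.sin ψ + ψ| ≤ |ψ| ^ 3 * (3 * |ψ|) := by
          exact mul_le_mul h2 h5 (abs_nonneg _) (pow_nonneg (abs_nonneg _) 3)
      _ = 3 * |ψ| ^ 4 := by ring
  simpa [abs_pow] using key

lemma cos_isBigO : (fun ψ : ℝ => Real.cos ψ - (1 - ψ ^ 2 / 2)) =O[nhds 0] fun ψ => ψ ^ 4 := by
  rw [isBigO_iff]
  refine ⟨1, ?_⟩
  filter_upwards [ev_abs_le_one] with ψ h1
  have hb := Real.cos_bound h1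
  have : |ψ| ^ 4 * (5 / 96) ≤ 1 * |ψ| ^ 4 := by nlinarith [pow_nonneg (abs_nonneg ψ) 4]
  simp only [Real.norm_eq_abs, abs_pow]
  linarith

lemma sqrt_term_isBigO (ρ η : ℝ) (hρ : 0 < ρ) (hη : 0 < η) (hηρ : η < ρ) :
    (fun ψ : ℝ => Real.sqrt (ρ ^ 2 - η ^ 2 * Real.sin ψ ^ 2)
        - (ρ - η ^ 2 / (2 * ρ) * Real.sin ψ ^ 2)) =O[nhds 0] fun ψ => ψ ^ 4 := by
  have hm : 0 < ρ - η ^ 2 / (2 * ρ) := by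
    rw [sub_pos, div_lt_iff₀ (by positivity)]
    nlinarith
  rw [isBigO_iff]
  refine ⟨η ^ 4 / (4 * ρ ^ 2 * (ρ - η ^ 2 / (2 * ρ))), Filter.Eventually.of_forall fun ψ => ?_⟩
  set s := Real.sin ψ ^ 2 with hs
  have hs0 : 0 ≤ s := sq_nonneg _
  have hs1 : s ≤ 1 := Real.sin_sq_le_one ψ
  have hsψ : s ≤ ψ ^ 2 := Real.sin_sq_le_sq
  have hnn : 0 ≤ ρ ^ 2 - η ^ 2 * s := by nlinarith
  set A := Real.sqrt (ρ ^ 2 - η ^ 2 * s) with hA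
  have hA0 : 0 ≤ A := Real.sqrt_nonneg _
  have hA2 : A ^ 2 = ρ ^ 2 - η ^ 2 * s := Real.sq_sqrt hnn
  set B := ρ - η ^ 2 / (2 * ρ) * s with hB
  have hBm : ρ - η ^ 2 / (2 * ρ) ≤ B := by
    rw [hB]
    have : η ^ 2 / (2 * ρ) * s ≤ η ^ 2 / (2 * ρ) := by
      nlinarith [div_nonneg (sq_nonneg η) (by positivity : (0:ℝ) ≤ 2 * ρ)]
    linarith
  have hD : (A - B) * (A + B) = -(η ^ 4 * s ^ 2 / (4 * ρ ^ 2)) := by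
    have h : (A - B) * (A + B) = A ^ 2 - B ^ 2 := by ring
    rw [h, hA2, hB]
    field_simp
    ring
  have hψ4 : s ^ 2 ≤ ψ ^ 4 := by nlinarith [sq_nonneg ψ]
  have hAB : ρ - η ^ 2 / (2 * ρ) ≤ A + B := by linarith
  have hk0 : 0 ≤ η ^ 4 * s ^ 2 / (4 * ρ ^ 2) := by positivity
  have hABpos : 0 < A + B := lt_of_lt_of_le hm hAB
  have hD2 : A - B = -(η ^ 4 * s ^ 2 / (4 * ρ ^ 2)) / (A + B) :=
    (eq_div_iff (ne_of_gt hABpos)).mpr hD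
  rw [Real.norm_eq_abs, Real.norm_eq_abs, abs_pow]
  have habs : |ψ| ^ 4 = ψ ^ 4 := by rw [← abs_pow, abs_of_nonneg (by positivity)]
  rw [habs, hD2, abs_div, abs_neg, abs_of_nonneg hk0, abs_of_pos hABpos]
  calc η ^ 4 * s ^ 2 / (4 * ρ ^ 2) / (A + B)
      ≤ η ^ 4 * ψ ^ 4 / (4 * ρ ^ 2) / (ρ - η ^ 2 / (2 * ρ)) := by
        apply div_le_div₀ (by positivity) _ hm hAB
        gcongr
    _ = η ^ 4 / (4 * ρ ^ 2 * (ρ - η ^ 2 / (2 * ρ))) * ψ ^ 4 := by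
        field_simp

lemma pow4_isBigO_pow2 : (fun ψ : ℝ => ψ ^ 4) =O[nhds 0] fun ψ => ψ ^ 2 := by
  rw [isBigO_iff]
  refine ⟨1, ?_⟩
  filter_upwards [ev_abs_le_one] with ψ h1
  rw [Real.norm_eq_abs, Real.norm_eq_abs, abs_pow, abs_pow, one_mul]
  exact pow_le_pow_of_le_one (abs_nonneg _) h1 (by norm_num)

lemma log_one_add_bound {u : ℝ} (hu : |u| < 1 / 2) : |Real.log (1 + u) - u| ≤ 2 * u ^ 2 := by
  have h1 : |(-u)| < 1 := by rw [abs_neg]; linarith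
  have h := Real.abs_log_sub_add_sum_range_le h1 1
  simp only [Finset.sum_range_one, pow_one, Nat.cast_zero, zero_add, pow_one, div_one,
    sub_neg_eq_add, abs_neg] at h
  have h2 : Real.log (1 + u) - u = -u + Real.log (1 + u) := by ring
  rw [h2]
  have h3 : |u| ^ (1 + 1) / (1 - |u|) ≤ 2 * u ^ 2 := by
    norm_num
    have h4 : (1:ℝ) / 2 ≤ 1 - |u| := by linarith
    have h5 : |u| ^ 2 = u ^ 2 := sq_abs u
    rw [div_le_iff₀ (by linarith)]
    nlinarith [sq_nonneg u, abs_nonneg u]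
  exact le_trans h h3
/-- With `l(ψ) = √(ρ² − η² sin²ψ) + η cos ψ`, `q(ψ) = √(ρ² − η² sin²ψ) − η cos ψ`
and `τ(ψ) = ln(l(0)/q(0)) − ln(l(ψ)/q(ψ))`, one has `τ(ψ) = (η/ρ)ψ² + O(ψ⁴)` as
`ψ → 0⁺`; in particular `√(τ(ψ))/sin ψ → √(η/ρ)`. -/
theorem tau_asymptotics (ρ η : ℝ) (hρ : 0 < ρ) (hη : 0 < η) (hηρ : η < ρ)
    (l q τ : ℝ → ℝ)
    (hl : ∀ ψ, l ψ = Real.sqrt (ρ ^ 2 - η ^ 2 * Real.sin ψ ^ 2) + η * Real.cos ψ)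
    (hq : ∀ ψ, q ψ = Real.sqrt (ρ ^ 2 - η ^ 2 * Real.sin ψ ^ 2) - η * Real.cos ψ)
    (hτ : ∀ ψ, τ ψ = Real.log (l 0 / q 0) - Real.log (l ψ / q ψ)) :
    (fun ψ => τ ψ - (η / ρ) * ψ ^ 2) =O[nhdsWithin 0 (Set.Ioi 0)] (fun ψ => ψ ^ 4)
      ∧ Tendsto (fun ψ => Real.sqrt (τ ψ) / Real.sin ψ)
          (nhdsWithin 0 (Set.Ioi 0)) (nhds (Real.sqrt (η / ρ))) := by
  have hρη : (0:ℝ) < ρ + η := by linarith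
  have hnn : ∀ ψ : ℝ, 0 ≤ ρ ^ 2 - η ^ 2 * Real.sin ψ ^ 2 := fun ψ => by
    nlinarith [Real.sin_sq_le_one ψ, sq_nonneg (Real.sin ψ)]
  have hprod : ∀ ψ, l ψ * q ψ = ρ ^ 2 - η ^ 2 := by
    intro ψ
    rw [hl, hq]
    have h1 : Real.sqrt (ρ ^ 2 - η ^ 2 * Real.sin ψ ^ 2) ^ 2 = ρ ^ 2 - η ^ 2 * Real.sin ψ ^ 2 :=
      Real.sq_sqrt (hnn ψ)
    have h2 := Real.sin_sq_add_cos_sq ψ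
    nlinarith [h1, h2]
  have hlpos : ∀ ψ, 0 < l ψ := by
    intro ψ
    have hpq : 0 < l ψ * q ψ := by rw [hprod]; nlinarith
    have hsum : 0 ≤ l ψ + q ψ := by
      rw [hl, hq]
      have := Real.sqrt_nonneg (ρ ^ 2 - η ^ 2 * Real.sin ψ ^ 2); linarith
    nlinarith
  have hqpos : ∀ ψ, 0 < q ψ := fun ψ => by nlinarith [hlpos ψ, (by rw [hprod ψ]; nlinarith : 0 < l ψ * q ψ)]
  have hl0 : l 0 = ρ + η := by
    rw [hl]
    simp [Real.sqrt_sq hρ.le]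
  have hτ2 : ∀ ψ, τ ψ = -2 * Real.log (l ψ / (ρ + η)) := by
    intro ψ
    have hlq : ∀ φ, Real.log (l φ / q φ) = 2 * Real.log (l φ) - Real.log (ρ ^ 2 - η ^ 2) := by
      intro φ
      have hq0 : q φ ≠ 0 := (hqpos φ).ne'
      have hl0' : l φ ≠ 0 := (hlpos φ).ne'
      have he : l φ / q φ = l φ ^ 2 / (ρ ^ 2 - η ^ 2) := by
        rw [← hprod φ]; field_simp
      rw [he, Real.log_div (pow_ne_zero 2 hl0') (by rw [← hprod φ]; exact mul_ne_zero hl0' hq0),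
        Real.log_pow]
      push_cast; ring
    rw [hτ, hlq, hlq, hl0, Real.log_div (hlpos ψ).ne' (ne_of_gt hρη)]
    ring
  -- expansion of l
  have hT : (fun ψ => l ψ - ((ρ + η) - η * (ρ + η) / (2 * ρ) * ψ ^ 2)) =O[nhds 0]
      fun ψ => ψ ^ 4 := by
    have h1 := sqrt_term_isBigO ρ η hρ hη hηρ
    have h2 := cos_isBigO.const_mul_left η
    have h3 := sin_sq_isBigO.const_mul_left (η ^ 2 / (2 * ρ))
    refine ((h1.add h2).sub h3).congr_left fun ψ => ?_
    rw [hl]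
    field_simp
    ring
  set x : ℝ → ℝ := fun ψ => l ψ / (ρ + η) - 1 with hxdef
  have hx : (fun ψ => x ψ + η / (2 * ρ) * ψ ^ 2) =O[nhds 0] fun ψ => ψ ^ 4 := by
    refine (hT.const_mul_left (ρ + η)⁻¹).congr_left fun ψ => ?_
    simp only [hxdef]
    field_simp
    ring
  have hx2 : x =O[nhds 0] fun ψ => ψ ^ 2 := by
    have h1 : (fun ψ => x ψ + η / (2 * ρ) * ψ ^ 2) =O[nhds 0] fun ψ => ψ ^ 2 :=
      hx.trans pow4_isBigO_pow2
    have h2 : (fun ψ : ℝ => η / (2 * ρ) * ψ ^ 2) =O[nhds 0] fun ψ => ψ ^ 2 :=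
      (isBigO_refl _ _).const_mul_left _
    exact (h1.sub h2).congr_left fun ψ => by ring
  have hx0 : Tendsto x (nhds 0) (nhds 0) := by
    refine hx2.trans_tendsto ?_
    have : Tendsto (fun ψ : ℝ => ψ ^ 2) (nhds 0) (nhds (0 ^ 2)) := (continuous_pow 2).tendsto 0
    simpa using this
  have hxhalf : ∀ᶠ ψ in nhds (0:ℝ), |x ψ| < 1 / 2 := by
    filter_upwards [Metric.tendsto_nhds.mp hx0 (1 / 2) (by norm_num)] with ψ h
    rwa [Real.dist_eq, sub_zero] at h
  have hlog : (fun ψ => Real.log (1 + x ψ) - x ψ) =O[nhds 0] fun ψ => ψ ^ 4 := by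
    have hsq : (fun ψ => x ψ * x ψ) =O[nhds 0] fun ψ => ψ ^ 4 := by
      have hmul := hx2.mul hx2
      refine hmul.trans ?_
      exact (Filter.EventuallyEq.of_eq (funext fun ψ => by ring :
        (fun ψ : ℝ => ψ ^ 2 * ψ ^ 2) = fun ψ => ψ ^ 4)).trans_isBigO (isBigO_refl _ _)
    refine IsBigO.trans ?_ hsq
    rw [isBigO_iff]
    refine ⟨2, ?_⟩
    filter_upwards [hxhalf] with ψ h
    have hb := log_one_add_bound h
    rw [Real.norm_eq_abs, Real.norm_eq_abs]
    calc |Real.log (1 + x ψ) - x ψ| ≤ 2 * x ψ ^ 2 := hb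
      _ = 2 * |x ψ * x ψ| := by rw [abs_of_nonneg (mul_self_nonneg _)]; ring
  have hmain : (fun ψ => τ ψ - η / ρ * ψ ^ 2) =O[nhds 0] fun ψ => ψ ^ 4 := by
    refine ((hlog.add hx).const_mul_left (-2)).congr_left fun ψ => ?_
    have h1 : (1 : ℝ) + x ψ = l ψ / (ρ + η) := by simp only [hxdef]; ring
    rw [hτ2 ψ, ← h1]
    field_simp
    ring
  refine ⟨hmain.mono nhdsWithin_le_nhds, ?_⟩
  set L := nhdsWithin (0:ℝ) (Set.Ioi 0) with hL
  have hmem : ∀ᶠ ψ in L, (0:ℝ) < ψ := eventually_mem_nhdsWithin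
  -- τ/ψ² → η/ρ
  have hratio : Tendsto (fun ψ => τ ψ / ψ ^ 2) L (nhds (η / ρ)) := by
    have h2 : (fun ψ => τ ψ / ψ ^ 2 - η / ρ) =O[L] fun ψ => ψ ^ 2 := by
      rcases (hmain.mono nhdsWithin_le_nhds : _ =O[L] _).bound with ⟨c, hc⟩
      rw [isBigO_iff]
      refine ⟨c, ?_⟩
      filter_upwards [hc, hmem] with ψ h hψ
      have hψ2 : (0:ℝ) < ψ ^ 2 := by positivity
      have heq : τ ψ / ψ ^ 2 - η / ρ = (τ ψ - η / ρ * ψ ^ 2) / ψ ^ 2 := by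
        field_simp
      have habs2 : |ψ ^ 2| = ψ ^ 2 := abs_of_pos hψ2
      have habs4 : |ψ ^ 4| = ψ ^ 4 := abs_of_nonneg (by positivity)
      rw [Real.norm_eq_abs, Real.norm_eq_abs, heq, abs_div, habs2, div_le_iff₀ hψ2]
      rw [Real.norm_eq_abs, Real.norm_eq_abs] at h
      calc |τ ψ - η / ρ * ψ ^ 2| ≤ c * |ψ ^ 4| := h
        _ = c * ψ ^ 2 * ψ ^ 2 := by rw [habs4]; ring
    have h3 : Tendsto (fun ψ => τ ψ / ψ ^ 2 - η / ρ) L (nhds 0) := by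
      refine h2.trans_tendsto ?_
      have : Tendsto (fun ψ : ℝ => ψ ^ 2) (nhds 0) (nhds (0 ^ 2)) := (continuous_pow 2).tendsto 0
      simpa using this.mono_left nhdsWithin_le_nhds
    have := h3.add_const (η / ρ)
    simpa using this
  have hsqrt : Tendsto (fun ψ => Real.sqrt (τ ψ / ψ ^ 2)) L (nhds (Real.sqrt (η / ρ))) :=
    (Real.continuous_sqrt.tendsto _).comp hratio
  have heq1 : ∀ᶠ ψ in L, Real.sqrt (τ ψ / ψ ^ 2) = Real.sqrt (τ ψ) / ψ := by
    filter_upwards [hmem] with ψ hψ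
    rw [Real.sqrt_div' _ (sq_nonneg ψ), Real.sqrt_sq hψ.le]
  have hsqrt' : Tendsto (fun ψ => Real.sqrt (τ ψ) / ψ) L (nhds (Real.sqrt (η / ρ))) :=
    hsqrt.congr' heq1
  have hsin1 : Tendsto (fun ψ => Real.sin ψ / ψ) L (nhds 1) := by
    have h := (Real.hasDerivAt_sin 0)
    rw [hasDerivAt_iff_tendsto_slope] at h
    have hmono : L ≤ nhdsWithin (0:ℝ) {(0:ℝ)}ᶜ :=
      nhdsWithin_mono 0 (fun ψ hψ => ne_of_gt hψ)
    have h2 := h.mono_left hmono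
    simp only [slope_fun_def_field, Real.sin_zero, Real.cos_zero, sub_zero] at h2
    exact h2
  have hsin2 : Tendsto (fun ψ => ψ / Real.sin ψ) L (nhds 1) := by
    have := hsin1.inv₀ one_ne_zero
    simpa [inv_div] using this
  have hfinal := hsqrt'.mul hsin2
  rw [mul_one] at hfinal
  refine hfinal.congr' ?_
  filter_upwards [hmem] with ψ hψ
  rw [div_mul_div_comm, mul_comm (Real.sqrt (τ ψ)) ψ, mul_div_mul_left _ _ (ne_of_gt hψ)]
end

section
/- With ρ > 0, 0 < η < ρ, τ(ψ) = ln((ρ+η)/(ρ−η)) − ln(l(ψ)/q(ψ)) where l, q are as in the chord construction, the function ψ ↦ √(τ(ψ))/sin ψ is monotone increasing on (0, π/2] and its maximum value on [0, π/2] equals √(ln((ρ+η)/(ρ−η))) = √(r/ρ) where r = ρ ln((ρ+η)/(ρ−η)), attained at ψ = π/2. -/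
open Real Set

set_option maxHeartbeats 1000000 in

/-- The function `ψ ↦ √(τ(ψ))/sin ψ` is monotone increasing on `(0, π/2]` and
its maximum on `[0, π/2]` is `√(ln((ρ+η)/(ρ−η))) = √(r/ρ)`, attained at `π/2`. -/
theorem sqrt_tau_over_sin_monotone_max (ρ η : ℝ) (hρ : 0 < ρ) (hη : 0 < η)
    (hηρ : η < ρ) (l q τ h : ℝ → ℝ)
    (hl : ∀ ψ, l ψ = Real.sqrt (ρ ^ 2 - η ^ 2 * Real.sin ψ ^ 2) + η * Real.cos ψ)
    (hq : ∀ ψ, q ψ = Real.sqrt (ρ ^ 2 - η ^ 2 * Real.sin ψ ^ 2) - η * Real.cos ψ)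
    (hτ : ∀ ψ, τ ψ = Real.log ((ρ + η) / (ρ - η)) - Real.log (l ψ / q ψ))
    (hh : ∀ ψ, h ψ = Real.sqrt (τ ψ) / Real.sin ψ) :
    MonotoneOn h (Ioc 0 (π / 2))
      ∧ (∀ ψ ∈ Icc 0 (π / 2), h ψ ≤ Real.sqrt (Real.log ((ρ + η) / (ρ - η))))
      ∧ h (π / 2) = Real.sqrt (Real.log ((ρ + η) / (ρ - η))) := by
  have hρη : (0:ℝ) < ρ + η := by linarith
  have hρη' : (0:ℝ) < ρ - η := by linarith
  set s : ℝ → ℝ := fun ψ => Real.sqrt (ρ ^ 2 - η ^ 2 * Real.sin ψ ^ 2) with hs_def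
  have harg : ∀ ψ, 0 < ρ ^ 2 - η ^ 2 * Real.sin ψ ^ 2 := by
    intro ψ
    nlinarith [Real.sin_sq_le_one ψ, sq_nonneg (Real.sin ψ)]
  have hspos : ∀ ψ, 0 < s ψ := fun ψ => Real.sqrt_pos.2 (harg ψ)
  have hs2 : ∀ ψ, s ψ ^ 2 = ρ ^ 2 - η ^ 2 * Real.sin ψ ^ 2 := fun ψ => Real.sq_sqrt (harg ψ).le
  have hsle : ∀ ψ, s ψ ≤ ρ := by
    intro ψ
    nlinarith [hspos ψ, hs2 ψ, sq_nonneg (Real.sin ψ)]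
  have hlfun : l = fun ψ => s ψ + η * Real.cos ψ := funext fun ψ => hl ψ
  have hlpos : ∀ ψ, 0 < l ψ := by
    intro ψ
    have hlx : l ψ = s ψ + η * Real.cos ψ := hl ψ
    nlinarith [hspos ψ, hs2 ψ, Real.sin_sq_add_cos_sq ψ, sq_nonneg (s ψ + η * Real.cos ψ)]
  have hqpos : ∀ ψ, 0 < q ψ := by
    intro ψ
    have hqx : q ψ = s ψ - η * Real.cos ψ := hq ψ
    nlinarith [hspos ψ, hs2 ψ, Real.sin_sq_add_cos_sq ψ, sq_nonneg (s ψ - η * Real.cos ψ)]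
  have hlq : ∀ ψ, l ψ * q ψ = (ρ + η) * (ρ - η) := by
    intro ψ
    have hlx : l ψ = s ψ + η * Real.cos ψ := hl ψ
    have hqx : q ψ = s ψ - η * Real.cos ψ := hq ψ
    rw [hlx, hqx]
    linear_combination hs2 ψ - η ^ 2 * Real.sin_sq_add_cos_sq ψ
  have hτ2 : ∀ ψ, τ ψ = 2 * (Real.log (ρ + η) - Real.log (l ψ)) := by
    intro ψ
    have hq' : q ψ = (ρ + η) * (ρ - η) / l ψ := by
      rw [eq_div_iff (hlpos ψ).ne']
      linear_combination hlq ψ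
    rw [hτ ψ, Real.log_div (hlpos ψ).ne' (hqpos ψ).ne',
      Real.log_div hρη.ne' hρη'.ne', hq',
      Real.log_div (by positivity : ((ρ+η)*(ρ-η)) ≠ 0) (hlpos ψ).ne',
      Real.log_mul hρη.ne' hρη'.ne']
    ring
  have hlle : ∀ ψ, l ψ ≤ ρ + η := by
    intro ψ
    have hlx : l ψ = s ψ + η * Real.cos ψ := hl ψ
    have := mul_le_mul_of_nonneg_left (Real.cos_le_one ψ) hη.le
    have := hsle ψ
    linarith
  have hτnn : ∀ ψ, 0 ≤ τ ψ := by
    intro ψ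
    rw [hτ2 ψ]
    have := Real.log_le_log (hlpos ψ) (hlle ψ)
    linarith
  -- key inequality
  have hkey : ∀ ψ ∈ Icc 0 (π/2), τ ψ * (s ψ * Real.cos ψ) ≤ η * Real.sin ψ ^ 2 := by
    intro ψ hψ
    have hπ := Real.pi_pos
    have hc : 0 ≤ Real.cos ψ :=
      Real.cos_nonneg_of_mem_Icc ⟨by linarith [hψ.1], hψ.2⟩
    have hsin0 : 0 ≤ Real.sin ψ :=
      Real.sin_nonneg_of_nonneg_of_le_pi hψ.1 (by linarith [hψ.2])
    have hc1 : Real.cos ψ ≤ 1 := Real.cos_le_one ψ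
    have hL : l ψ = s ψ + η * Real.cos ψ := hl ψ
    have hS2 := hs2 ψ
    have hsc := Real.sin_sq_add_cos_sq ψ
    have hSpos := hspos ψ
    have hSle := hsle ψ
    have hLpos := hlpos ψ
    have hLle := hlle ψ
    have hlog : Real.log ((ρ+η)/l ψ) ≤ (ρ+η)/l ψ - 1 :=
      Real.log_le_sub_one_of_pos (div_pos hρη hLpos)
    have hτle : τ ψ * l ψ ≤ 2*(ρ+η-l ψ) := by
      have hτeq : τ ψ = 2 * Real.log ((ρ+η)/l ψ) := by
        rw [hτ2 ψ, Real.log_div hρη.ne' hLpos.ne']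
      rw [hτeq]
      have h1 := mul_le_mul_of_nonneg_right hlog hLpos.le
      rw [sub_mul, div_mul_cancel₀ _ hLpos.ne'] at h1
      nlinarith [h1]
    have hfac : (ρ+η-l ψ)*(ρ-η+l ψ) = 2*η*(l ψ)*(1-Real.cos ψ) := by
      nlinarith [hL, hS2, hsc]
    have h3 : 4*(s ψ)*(Real.cos ψ) ≤ (1+Real.cos ψ)*(ρ-η+l ψ) := by
      nlinarith [mul_nonneg hSpos.le (sq_nonneg (1-Real.cos ψ)),
        mul_nonneg (mul_nonneg (by linarith : (0:ℝ) ≤ 1+Real.cos ψ)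
          (by linarith : (0:ℝ) ≤ 1-Real.cos ψ)) (by linarith : (0:ℝ) ≤ ρ-η),
        mul_nonneg (mul_nonneg (by linarith : (0:ℝ) ≤ 1+Real.cos ψ) hc)
          (by linarith : (0:ℝ) ≤ ρ - s ψ)]
    have hDpos : (0:ℝ) < ρ-η+l ψ := by linarith
    have hmain : 2*(ρ+η-l ψ)*(s ψ*Real.cos ψ)*(ρ-η+l ψ) ≤ η*Real.sin ψ^2*(l ψ)*(ρ-η+l ψ) := by
      have e1 : 2*(ρ+η-l ψ)*(s ψ*Real.cos ψ)*(ρ-η+l ψ)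
          = 4*(s ψ)*(Real.cos ψ)*(η*(l ψ)*(1-Real.cos ψ)) := by
        linear_combination 2*(s ψ)*(Real.cos ψ)*hfac
      have e2 : η*Real.sin ψ^2*(l ψ)*(ρ-η+l ψ)
          = (1+Real.cos ψ)*(ρ-η+l ψ)*(η*(l ψ)*(1-Real.cos ψ)) := by
        linear_combination η*(l ψ)*(ρ-η+l ψ)*hsc
      rw [e1, e2]
      exact mul_le_mul_of_nonneg_right h3
        (mul_nonneg (mul_nonneg hη.le hLpos.le) (by linarith))
    have hmain2 : 2*(ρ+η-l ψ)*(s ψ*Real.cos ψ) ≤ η*Real.sin ψ^2*(l ψ) :=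
      le_of_mul_le_mul_right (by linarith [hmain]) hDpos
    have hscnn : 0 ≤ s ψ * Real.cos ψ := mul_nonneg hSpos.le hc
    have h4 := mul_le_mul_of_nonneg_right hτle hscnn
    have h5 : τ ψ * (s ψ * Real.cos ψ) * l ψ ≤ η * Real.sin ψ ^ 2 * l ψ := by
      nlinarith [h4, hmain2]
    exact le_of_mul_le_mul_right h5 hLpos
  -- derivative of τ
  have hτd : ∀ x, HasDerivAt τ (2*η*Real.sin x / s x) x := by
    intro x
    have h1 : HasDerivAt (fun ψ => ρ ^ 2 - η ^ 2 * Real.sin ψ ^ 2)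
        (-(η^2*(2*Real.sin x*Real.cos x))) x := by
      have := (((Real.hasDerivAt_sin x).pow 2).const_mul (η^2)).const_sub (ρ^2)
      refine this.congr_deriv ?_
      push_cast
      ring
    have hS : HasDerivAt s (-(η^2*(2*Real.sin x*Real.cos x)) / (2 * s x)) x := by
      rw [hs_def]
      exact h1.sqrt (harg x).ne'
    have hL : HasDerivAt l (-(η^2*(2*Real.sin x*Real.cos x)) / (2 * s x) + η * (-Real.sin x)) x := by
      rw [hlfun]
      exact hS.add ((Real.hasDerivAt_cos x).const_mul η)
    have hlogl := hL.log (hlpos x).ne'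
    have hτd' := (hlogl.const_sub (Real.log (ρ+η))).const_mul 2
    have hτfun : τ = fun ψ => 2 * (Real.log (ρ + η) - Real.log (l ψ)) := funext hτ2
    rw [hτfun]
    refine hτd'.congr_deriv ?_
    have hlx : l x = s x + η * Real.cos x := hl x
    have h0 : (0:ℝ) < η * Real.cos x + s x := by
      have := hlpos x
      rw [hlx] at this
      linarith
    rw [hlx]
    have hl0 : s x + η * Real.cos x ≠ 0 := by linarith
    field_simp [(hspos x).ne', hl0]
    ring
  -- derivative of g = τ / sin²
  have hsinpos : ∀ x ∈ Ioo (0:ℝ) (π/2), 0 < Real.sin x := by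
    intro x hx
    exact Real.sin_pos_of_pos_of_lt_pi hx.1 (by linarith [hx.2, Real.pi_pos])
  have hgd : ∀ x ∈ Ioo (0:ℝ) (π/2), HasDerivAt (fun ψ => τ ψ / Real.sin ψ ^ 2)
      ((2*η*Real.sin x / s x * Real.sin x ^ 2 - τ x * (2 * Real.sin x ^ 1 * Real.cos x))
        / (Real.sin x ^ 2) ^ 2) x := by
    intro x hx
    have h2 : HasDerivAt (fun ψ => Real.sin ψ ^ 2) ((2:ℕ) * Real.sin x ^ 1 * Real.cos x) x :=
      (Real.hasDerivAt_sin x).pow 2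
    have := (hτd x).div h2 (pow_ne_zero 2 (hsinpos x hx).ne')
    exact this.congr_deriv (by push_cast; ring)
  have hcontl : Continuous l := by
    rw [hlfun, hs_def]
    exact ((continuous_const.sub
      (continuous_const.mul (Real.continuous_sin.pow 2))).sqrt).add
      (continuous_const.mul Real.continuous_cos)
  have hcontτ : Continuous τ := by
    rw [funext hτ2]
    refine continuous_const.mul (continuous_const.sub ?_)
    exact continuous_iff_continuousAt.2 fun x =>
      (Real.continuousAt_log (hlpos x).ne').comp hcontl.continuousAt
  have hmonog : MonotoneOn (fun ψ => τ ψ / Real.sin ψ ^ 2) (Ioc 0 (π/2)) := by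
    apply monotoneOn_of_deriv_nonneg (convex_Ioc _ _)
    · exact hcontτ.continuousOn.div (Real.continuous_sin.pow 2).continuousOn
        (fun x hx => pow_ne_zero 2
          (Real.sin_pos_of_pos_of_lt_pi hx.1 (by linarith [hx.2, Real.pi_pos])).ne')
    · rw [interior_Ioc]
      exact fun x hx => (hgd x hx).differentiableAt.differentiableWithinAt
    · rw [interior_Ioc]
      intro x hx
      rw [(hgd x hx).deriv]
      apply div_nonneg _ (by positivity)
      have hk := hkey x ⟨hx.1.le, hx.2.le⟩
      have hsp := hsinpos x hx
      have hSpos := hspos x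
      have e : 2*η*Real.sin x / s x * Real.sin x ^ 2 - τ x * (2 * Real.sin x ^ 1 * Real.cos x)
          = (2 * Real.sin x / s x) * (η * Real.sin x ^ 2 - τ x * (s x * Real.cos x)) := by
        field_simp
      rw [e]
      exact mul_nonneg (by positivity) (by linarith)
  -- relate h to g
  have hgh : ∀ ψ ∈ Ioc (0:ℝ) (π/2), h ψ = Real.sqrt (τ ψ / Real.sin ψ ^ 2) := by
    intro ψ hψ
    have hsp : 0 < Real.sin ψ :=
      Real.sin_pos_of_pos_of_lt_pi hψ.1 (by linarith [hψ.2, Real.pi_pos])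
    rw [hh ψ, Real.sqrt_div (hτnn ψ), Real.sqrt_sq hsp.le]
  have hmono : MonotoneOn h (Ioc 0 (π/2)) := by
    intro a ha b hb hab
    rw [hgh a ha, hgh b hb]
    exact Real.sqrt_le_sqrt (hmonog ha hb hab)
  -- value at π/2
  have hπ2mem : π/2 ∈ Ioc (0:ℝ) (π/2) := ⟨by positivity, le_refl _⟩
  have hτπ2 : τ (π/2) = Real.log ((ρ+η)/(ρ-η)) := by
    have hlv : l (π/2) = Real.sqrt ((ρ+η)*(ρ-η)) := by
      rw [hl, Real.sin_pi_div_two, Real.cos_pi_div_two]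
      rw [show ρ^2 - η^2*(1:ℝ)^2 = (ρ+η)*(ρ-η) by ring]
      ring
    rw [hτ2, hlv, Real.log_sqrt (by positivity),
      Real.log_mul hρη.ne' hρη'.ne', Real.log_div hρη.ne' hρη'.ne']
    ring
  have hπ2 : h (π/2) = Real.sqrt (Real.log ((ρ+η)/(ρ-η))) := by
    rw [hh, Real.sin_pi_div_two, hτπ2, div_one]
  refine ⟨hmono, ?_, hπ2⟩
  intro ψ hψ
  rcases eq_or_lt_of_le hψ.1 with h0 | h0
  · rw [hh, ← h0, Real.sin_zero, div_zero]
    exact Real.sqrt_nonneg _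
  · calc h ψ ≤ h (π/2) := hmono ⟨h0, hψ.2⟩ hπ2mem hψ.2
      _ = _ := hπ2
end
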